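/- Let M be a finite multiset of elements of ℕ ∪ {∞}, each element being ≥ 2, and suppose that the sum over ν ∈ M of the real numbers (1 − 1/ν) equals 2 (with the convention 1/∞ = 0). Then M is exactly one of the six multisets: {∞, ∞}, {2, 2, ∞}, {2, 4, 4}, {2, 3, 6}, {3, 3, 3}, {2, 2, 2, 2}. -/
import Mathlib


/-- The weight `1 - 1/ν` of a point of an orbifold, with the convention
`1/∞ = 0`, i.e. `w(∞) = 1`. -/
noncomputable def orbWeight : ℕ∞ → ℝ :=
  fun ν => WithTop.recTopCoe 1 (fun k : ℕ => 1 - 1 / (k : ℝ)) ν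

lemma orbWeight_top : orbWeight ⊤ = 1 := rfl

lemma orbWeight_coe (k : ℕ) : orbWeight (k : ℕ∞) = 1 - 1/(k:ℝ) := rfl

lemma enat_cases (ν : ℕ∞) : ν = ⊤ ∨ ∃ n : ℕ, ν = n := by
  induction ν using ENat.recTopCoe with
  | top => exact Or.inl rfl
  | coe n => exact Or.inr ⟨n, rfl⟩

lemma orbWeight_le_one (ν : ℕ∞) : orbWeight ν ≤ 1 := by
  rcases enat_cases ν with rfl | ⟨n, rfl⟩
  · exact le_of_eq rfl
  · rw [orbWeight_coe]
    have : 0 ≤ 1/(n:ℝ) := by positivity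
    linarith

lemma half_le_orbWeight (ν : ℕ∞) (h : 2 ≤ ν) : 1/2 ≤ orbWeight ν := by
  rcases enat_cases ν with rfl | ⟨n, rfl⟩
  · rw [orbWeight_top]; norm_num
  · have hk : 2 ≤ n := by exact_mod_cast h
    have hk' : (2:ℝ) ≤ n := by exact_mod_cast hk
    rw [orbWeight_coe]
    have : 1/(n:ℝ) ≤ 1/2 := by
      apply one_div_le_one_div_of_le <;> linarith
    linarith

lemma orbWeight_eq_one (ν : ℕ∞) (h2 : 2 ≤ ν) (h : orbWeight ν = 1) : ν = ⊤ := by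
  rcases enat_cases ν with rfl | ⟨n, rfl⟩
  · rfl
  · exfalso
    have hk : 2 ≤ n := by exact_mod_cast h2
    have hk' : (2:ℝ) ≤ n := by exact_mod_cast hk
    rw [orbWeight_coe] at h
    have : 1/(n:ℝ) > 0 := by positivity
    linarith

lemma orbWeight_eq_half (ν : ℕ∞) (h2 : 2 ≤ ν) (h : orbWeight ν = 1/2) : ν = 2 := by
  rcases enat_cases ν with rfl | ⟨n, rfl⟩
  · rw [orbWeight_top] at h; norm_num at h
  · have hk : 2 ≤ n := by exact_mod_cast h2
    have hk' : (2:ℝ) ≤ n := by exact_mod_cast hk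
    rw [orbWeight_coe] at h
    have hk0 : (n:ℝ) ≠ 0 := by linarith
    have hn : (n:ℝ) = 2 := by field_simp at h; linarith
    have : n = 2 := by exact_mod_cast hn
    subst this
    rfl

lemma aux_le6 (a b c : ℕ) (ha : 2 ≤ a) (hb : 2 ≤ b) (hc : 2 ≤ c)
    (h : b*c + a*c + a*b = a*b*c) : a ≤ 6 := by
  by_contra hcon
  push_neg at hcon
  have ha7 : 7 ≤ a := hcon
  rcases Nat.lt_or_ge b 3 with hb' | hb' <;> rcases Nat.lt_or_ge c 3 with hc' | hc'
  · interval_cases b <;> interval_cases c <;> omega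
  · interval_cases b
    have h3 : c*7 ≤ c*a := Nat.mul_le_mul_left _ ha7
    have h4 : a*3 ≤ a*c := Nat.mul_le_mul_left _ hc'
    nlinarith [h3, h4]
  · interval_cases c
    have h3 : b*7 ≤ b*a := Nat.mul_le_mul_left _ ha7
    have h4 : a*3 ≤ a*b := Nat.mul_le_mul_left _ hb'
    nlinarith [h3, h4]
  · have h1 : a*b*3 ≤ a*b*c := Nat.mul_le_mul_left _ hc'
    have h2 : a*c*3 ≤ a*c*b := Nat.mul_le_mul_left _ hb'
    have h3 : b*c*7 ≤ b*c*a := Nat.mul_le_mul_left _ ha7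
    nlinarith [h1, h2, h3]

/-- classification of finite triples -/
lemma triple_class (a b c : ℕ) (ha : 2 ≤ a) (hb : 2 ≤ b) (hc : 2 ≤ c)
    (h : b*c + a*c + a*b = a*b*c) :
    (a=2∧b=4∧c=4) ∨ (a=4∧b=2∧c=4) ∨ (a=4∧b=4∧c=2) ∨
    (a=2∧b=3∧c=6) ∨ (a=2∧b=6∧c=3) ∨ (a=3∧b=2∧c=6) ∨ (a=3∧b=6∧c=2) ∨
    (a=6∧b=2∧c=3) ∨ (a=6∧b=3∧c=2) ∨ (a=3∧b=3∧c=3) := by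
  have ha6 : a ≤ 6 := aux_le6 a b c ha hb hc h
  have hperm : a*c + b*c + b*a = b*a*c := by zify at h ⊢; linear_combination h
  have hb6 : b ≤ 6 := aux_le6 b a c hb ha hc hperm
  have hperm2 : a*b + c*b + c*a = c*a*b := by zify at h ⊢; linear_combination h
  have hc6 : c ≤ 6 := aux_le6 c a b hc ha hb hperm2
  have h1 : a = 2 ∨ a = 3 ∨ a = 4 ∨ a = 5 ∨ a = 6 := by omega
  have hh2 : b = 2 ∨ b = 3 ∨ b = 4 ∨ b = 5 ∨ b = 6 := by omega
  have h3 : c = 2 ∨ c = 3 ∨ c = 4 ∨ c = 5 ∨ c = 6 := by omega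
  rcases h1 with rfl|rfl|rfl|rfl|rfl <;> rcases hh2 with rfl|rfl|rfl|rfl|rfl <;>
    rcases h3 with rfl|rfl|rfl|rfl|rfl <;> revert h <;> decide

lemma pair_class (b c : ℕ) (hb : 2 ≤ b) (hc : 2 ≤ c)
    (h : b + c = b*c) : b = 2 ∧ c = 2 := by
  have hb2 : b ≤ 2 := by
    by_contra hcon
    push_neg at hcon
    have h1 : c*3 ≤ c*b := Nat.mul_le_mul_left _ hcon
    nlinarith [h1]
  have hb' : b = 2 := le_antisymm hb2 hb
  subst hb'
  omega

/-- two finite weights summing to 1 are both `2` -/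
lemma two_finite (b c : ℕ) (hb : 2 ≤ b) (hc : 2 ≤ c)
    (h : orbWeight (b:ℕ∞) + orbWeight (c:ℕ∞) = 1) : b = 2 ∧ c = 2 := by
  rw [orbWeight_coe, orbWeight_coe] at h
  have hb' : (2:ℝ) ≤ b := by exact_mod_cast hb
  have hc' : (2:ℝ) ≤ c := by exact_mod_cast hc
  have hb0 : (b:ℝ) ≠ 0 := by linarith
  have hc0 : (c:ℝ) ≠ 0 := by linarith
  have key : ((b + c : ℕ) : ℝ) = ((b*c : ℕ) : ℝ) := by
    push_cast
    field_simp at h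
    nlinarith [h]
  exact pair_class b c hb hc (by exact_mod_cast key)

/-- the card-3 case -/
lemma three_case (a b c : ℕ∞) (ha : 2 ≤ a) (hb : 2 ≤ b) (hc : 2 ≤ c)
    (h : orbWeight a + orbWeight b + orbWeight c = 2) :
    ({a,b,c} : Multiset ℕ∞) = {2,2,⊤} ∨ ({a,b,c} : Multiset ℕ∞) = {2,4,4} ∨
    ({a,b,c} : Multiset ℕ∞) = {2,3,6} ∨ ({a,b,c} : Multiset ℕ∞) = {3,3,3} := by
  have hah := half_le_orbWeight a ha
  have hbh := half_le_orbWeight b hb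
  have hch := half_le_orbWeight c hc
  rcases enat_cases a with rfl | ⟨a, rfl⟩
  · rcases enat_cases b with rfl | ⟨b, rfl⟩
    · rw [orbWeight_top] at h; linarith
    · rcases enat_cases c with rfl | ⟨c, rfl⟩
      · rw [orbWeight_top] at h; linarith
      · rw [orbWeight_top] at h
        have hbn : 2 ≤ b := by exact_mod_cast hb
        have hcn : 2 ≤ c := by exact_mod_cast hc
        obtain ⟨rfl, rfl⟩ := two_finite b c hbn hcn (by linarith)
        left; decide
  · rcases enat_cases b with rfl | ⟨b, rfl⟩
    · rcases enat_cases c with rfl | ⟨c, rfl⟩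
      · rw [orbWeight_top] at h; linarith
      · rw [orbWeight_top] at h
        have han : 2 ≤ a := by exact_mod_cast ha
        have hcn : 2 ≤ c := by exact_mod_cast hc
        obtain ⟨rfl, rfl⟩ := two_finite a c han hcn (by linarith)
        left; decide
    · rcases enat_cases c with rfl | ⟨c, rfl⟩
      · rw [orbWeight_top] at h
        have han : 2 ≤ a := by exact_mod_cast ha
        have hbn : 2 ≤ b := by exact_mod_cast hb
        obtain ⟨rfl, rfl⟩ := two_finite a b han hbn (by linarith)
        left; decide
      · -- all finite
        have han : 2 ≤ a := by exact_mod_cast ha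
        have hbn : 2 ≤ b := by exact_mod_cast hb
        have hcn : 2 ≤ c := by exact_mod_cast hc
        have ha' : (2:ℝ) ≤ a := by exact_mod_cast han
        have hb' : (2:ℝ) ≤ b := by exact_mod_cast hbn
        have hc' : (2:ℝ) ≤ c := by exact_mod_cast hcn
        have ha0 : (a:ℝ) ≠ 0 := by linarith
        have hb0 : (b:ℝ) ≠ 0 := by linarith
        have hc0 : (c:ℝ) ≠ 0 := by linarith
        rw [orbWeight_coe, orbWeight_coe, orbWeight_coe] at h
        have key : ((b*c + a*c + a*b : ℕ) : ℝ) = ((a*b*c : ℕ) : ℝ) := by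
          push_cast
          field_simp at h
          nlinarith [h]
        have hnat : b*c + a*c + a*b = a*b*c := by exact_mod_cast key
        rcases triple_class a b c han hbn hcn hnat with
          ⟨rfl,rfl,rfl⟩|⟨rfl,rfl,rfl⟩|⟨rfl,rfl,rfl⟩|⟨rfl,rfl,rfl⟩|⟨rfl,rfl,rfl⟩|
          ⟨rfl,rfl,rfl⟩|⟨rfl,rfl,rfl⟩|⟨rfl,rfl,rfl⟩|⟨rfl,rfl,rfl⟩|⟨rfl,rfl,rfl⟩
        · right; left; decide
        · right; left; decide
        · right; left; decide
        · right; right; left; decide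
        · right; right; left; decide
        · right; right; left; decide
        · right; right; left; decide
        · right; right; left; decide
        · right; right; left; decide
        · right; right; right; decide

/-- A finite multiset of weights `ν ≥ 2` in `ℕ ∪ {∞}` with
`Σ (1 - 1/ν) = 2` is one of the six signatures `(∞,∞)`, `(2,2,∞)`, `(2,4,4)`,
`(2,3,6)`, `(3,3,3)`, `(2,2,2,2)`. -/
theorem stmt_15 (M : Multiset ℕ∞) (h2 : ∀ ν ∈ M, 2 ≤ ν)
    (hsum : (M.map orbWeight).sum = 2) :
    M = {⊤, ⊤} ∨ M = {2, 2, ⊤} ∨ M = {2, 4, 4} ∨ M = {2, 3, 6} ∨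
      M = {3, 3, 3} ∨ M = {2, 2, 2, 2} := by
  have hub : ∀ x ∈ M.map orbWeight, x ≤ 1 := by
    intro x hx
    obtain ⟨ν, hν, rfl⟩ := Multiset.mem_map.mp hx
    exact orbWeight_le_one ν
  have hlb : ∀ x ∈ M.map orbWeight, (1/2 : ℝ) ≤ x := by
    intro x hx
    obtain ⟨ν, hν, rfl⟩ := Multiset.mem_map.mp hx
    exact half_le_orbWeight ν (h2 ν hν)
  have hs1 := Multiset.sum_le_card_nsmul (M.map orbWeight) 1 hub
  have hs2 := Multiset.card_nsmul_le_sum hlb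
  rw [hsum, Multiset.card_map] at hs1 hs2
  rw [nsmul_eq_mul, mul_one] at hs1
  rw [nsmul_eq_mul] at hs2
  have hc2 : 2 ≤ M.card := by exact_mod_cast hs1
  have hc4 : M.card ≤ 4 := by
    by_contra hcon
    push_neg at hcon
    have : (5:ℝ) ≤ M.card := by exact_mod_cast hcon
    nlinarith
  have hcases : M.card = 2 ∨ M.card = 3 ∨ M.card = 4 := by omega
  rcases hcases with hcard | hcard | hcard
  · -- card 2 : both must be ⊤
    obtain ⟨a, b, rfl⟩ := Multiset.card_eq_two.mp hcard
    have hsum' : orbWeight a + orbWeight b = 2 := by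
      simp only [Multiset.insert_eq_cons, Multiset.map_cons, Multiset.map_singleton,
        Multiset.sum_cons, Multiset.sum_singleton] at hsum
      linarith
    have ha1 : orbWeight a ≤ 1 := orbWeight_le_one a
    have hb1 : orbWeight b ≤ 1 := orbWeight_le_one b
    have ha : a = ⊤ := orbWeight_eq_one a (h2 a (by simp)) (by linarith)
    have hb : b = ⊤ := orbWeight_eq_one b (h2 b (by simp)) (by linarith)
    subst ha; subst hb
    left; rfl
  · -- card 3
    obtain ⟨a, b, c, rfl⟩ := Multiset.card_eq_three.mp hcard
    have hsum' : orbWeight a + orbWeight b + orbWeight c = 2 := by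
      simp only [Multiset.insert_eq_cons, Multiset.map_cons, Multiset.map_singleton,
        Multiset.sum_cons, Multiset.sum_singleton] at hsum
      linarith
    rcases three_case a b c (h2 a (by simp)) (h2 b (by simp)) (h2 c (by simp)) hsum' with
      h' | h' | h' | h' <;> rw [h']
    · right; left; rfl
    · right; right; left; rfl
    · right; right; right; left; rfl
    · right; right; right; right; left; rfl
  · -- card 4 : all must be 2
    have hpos : ∃ a, a ∈ M := Multiset.card_pos_iff_exists_mem.mp (by omega)
    obtain ⟨a, haM⟩ := hpos
    obtain ⟨t, rfl⟩ := Multiset.exists_cons_of_mem haM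
    have ht : t.card = 3 := by
      rw [Multiset.card_cons] at hcard; omega
    obtain ⟨b, c, d, rfl⟩ := Multiset.card_eq_three.mp ht
    have hsum' : orbWeight a + orbWeight b + orbWeight c + orbWeight d = 2 := by
      simp only [Multiset.insert_eq_cons, Multiset.map_cons, Multiset.map_singleton,
        Multiset.sum_cons, Multiset.sum_singleton] at hsum
      linarith
    have hah : 1/2 ≤ orbWeight a := half_le_orbWeight a (h2 a (by simp))
    have hbh : 1/2 ≤ orbWeight b := half_le_orbWeight b (h2 b (by simp))
    have hch : 1/2 ≤ orbWeight c := half_le_orbWeight c (h2 c (by simp))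
    have hdh : 1/2 ≤ orbWeight d := half_le_orbWeight d (h2 d (by simp))
    have ha := orbWeight_eq_half a (h2 a (by simp)) (by linarith)
    have hb := orbWeight_eq_half b (h2 b (by simp)) (by linarith)
    have hc := orbWeight_eq_half c (h2 c (by simp)) (by linarith)
    have hd := orbWeight_eq_half d (h2 d (by simp)) (by linarith)
    subst ha; subst hb; subst hc; subst hd
    right; right; right; right; right; rfl
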